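/- Let 1 < α ≤ 2, m ∈ ℝ, 0 ≤ β ≤ 2−α, 0 < γ ≤ α−1, and a > 0 satisfying the nondegeneracy condition E_{α,α+β}(m a^α) E_{α,α−1−γ}(m a^α) ≠ E_{α,α+β−1}(m a^α) E_{α,α−γ}(m a^α). Define Ê₁(m t) = t^{α−2}[t E_{α,α−1−γ}(m a^α) E_{α,α}(m t^α) − a E_{α,α−γ}(m a^α) E_{α,α−1}(m t^α)] / (a^{α+β−1} Δ), where Δ = E_{α,α+β}(m a^α) E_{α,α−1−γ}(m a^α) − E_{α,α+β−1}(m a^α) E_{α,α−γ}(m a^α). Then (I^β Ê₁)(a) = 1 and (D^γ Ê₁)(a) = 0. -/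

import Mathlib

noncomputable def mlE (α β x : ℝ) : ℝ :=
  ∑' k : ℕ, x ^ k / Real.Gamma (α * k + β)

/-- Riemann-Liouville fractional integral of order `β ≥ 0` (identity for `β = 0`). -/
noncomputable def rlI (β : ℝ) (u : ℝ → ℝ) (t : ℝ) : ℝ :=
  if β = 0 then u t
  else (1 / Real.Gamma β) * ∫ s in (0:ℝ)..t, (t - s) ^ (β - 1) * u s

/-- Riemann-Liouville fractional derivative of order `γ ∈ (0,1]`
(ordinary derivative for `γ = 1`). -/
noncomputable def rlD (γ : ℝ) (u : ℝ → ℝ) (t : ℝ) : ℝ :=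
  if γ = 1 then deriv u t
  else deriv (fun τ : ℝ =>
    (1 / Real.Gamma (1 - γ)) * ∫ s in (0:ℝ)..τ, (τ - s) ^ (-γ) * u s) t

section Aux

open Real MeasureTheory Set intervalIntegral



lemma summable_ml {α : ℝ} (hα : 1 < α) (c x : ℝ) :
    Summable (fun k : ℕ => x ^ k / Real.Gamma (α * k + c)) := by
  obtain ⟨k₀, hk₀⟩ := exists_nat_ge ((2 - c) / (α - 1))
  rw [← summable_nat_add_iff k₀]
  apply Summable.of_norm
  have hfact : Summable (fun k : ℕ => |x| ^ k₀ * (|x| ^ k / (k.factorial : ℝ))) :=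
    (Real.summable_pow_div_factorial |x|).mul_left _
  apply hfact.of_nonneg_of_le (fun k => norm_nonneg _)
  intro k
  set K := k + k₀ with hK
  have h1 : (K : ℝ) + 2 ≤ α * K + c := by
    have h2c : 2 - c ≤ (α - 1) * k₀ := by
      rw [div_le_iff₀ (by linarith)] at hk₀; linarith [hk₀]
    have hkK : (k₀ : ℝ) ≤ (K : ℝ) := by
      simp only [hK, Nat.cast_add]; linarith [Nat.cast_nonneg (α := ℝ) k]
    nlinarith [Nat.cast_nonneg (α := ℝ) k₀, Nat.cast_nonneg (α := ℝ) K]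
  have hK2 : (2:ℝ) ≤ (K : ℝ) + 2 := by linarith [Nat.cast_nonneg (α := ℝ) K]
  have hmono : Real.Gamma ((K:ℝ) + 2) ≤ Real.Gamma (α * K + c) :=
    Real.Gamma_strictMonoOn_Ici.monotoneOn hK2 (le_trans hK2 h1) h1
  have hGval : Real.Gamma ((K:ℝ) + 2) = ((K + 1).factorial : ℝ) := by
    have := Real.Gamma_nat_eq_factorial (K + 1)
    rw [← this]; push_cast; ring_nf
  have hge : (k.factorial : ℝ) ≤ Real.Gamma (α * K + c) := by
    calc (k.factorial : ℝ) ≤ ((K + 1).factorial : ℝ) := by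
          exact_mod_cast Nat.factorial_le (by omega)
      _ = Real.Gamma ((K:ℝ) + 2) := hGval.symm
      _ ≤ _ := hmono
  have hΓpos : 0 < Real.Gamma (α * K + c) :=
    lt_of_lt_of_le (by positivity) hge
  have hnorm : ‖x ^ K / Real.Gamma (α * K + c)‖
      = |x| ^ K / Real.Gamma (α * K + c) := by
    rw [norm_div, norm_pow, Real.norm_eq_abs, Real.norm_eq_abs, abs_of_pos hΓpos]
  rw [hnorm, hK, pow_add, mul_comm (|x| ^ k) (|x| ^ k₀), mul_div_assoc]
  have : |x| ^ k / Real.Gamma (α * K + c) ≤ |x| ^ k / (k.factorial : ℝ) := by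
    apply div_le_div_of_nonneg_left (by positivity) _ hge
    exact_mod_cast Nat.factorial_pos k
  exact mul_le_mul_of_nonneg_left this (by positivity)



lemma real_beta {u v : ℝ} (hu : 0 < u) (hv : 0 < v) :
    ∫ x in (0:ℝ)..1, x ^ (u - 1) * (1 - x) ^ (v - 1)
      = Real.Gamma u * Real.Gamma v / Real.Gamma (u + v) := by
  have hC := Complex.Gamma_mul_Gamma_eq_betaIntegral
    (s := (u:ℂ)) (t := (v:ℂ)) (by simpa using hu) (by simpa using hv)
  have hbeta : Complex.betaIntegral u v
      = ((∫ x in (0:ℝ)..1, x ^ (u - 1) * (1 - x) ^ (v - 1) : ℝ) : ℂ) := by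
    rw [Complex.betaIntegral, ← intervalIntegral.integral_ofReal]
    apply intervalIntegral.integral_congr
    intro x hx
    rw [Set.uIcc_of_le (by norm_num : (0:ℝ) ≤ 1)] at hx
    obtain ⟨hx0, hx1⟩ := hx
    simp only [Complex.ofReal_mul, Complex.ofReal_cpow hx0,
      Complex.ofReal_cpow (by linarith : (0:ℝ) ≤ 1 - x)]
    push_cast
    ring_nf
  rw [hbeta] at hC
  have hΓ : (0:ℝ) < Real.Gamma (u + v) := Real.Gamma_pos_of_pos (by linarith)
  have : ((Real.Gamma u * Real.Gamma v : ℝ) : ℂ)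
      = ((Real.Gamma (u + v) * ∫ x in (0:ℝ)..1, x ^ (u - 1) * (1 - x) ^ (v - 1) : ℝ) : ℂ) := by
    push_cast
    rw [← Complex.Gamma_ofReal, ← Complex.Gamma_ofReal, ← Complex.Gamma_ofReal] at *
    rw [hC]; push_cast; ring
  have h2 := Complex.ofReal_injective this
  field_simp
  linarith [h2]



lemma beta_integrable {p q t : ℝ} (hp : -1 < p) (hq : 0 < q) (ht : 0 < t) :
    IntervalIntegrable (fun s => (t - s) ^ (q - 1) * s ^ p) volume 0 t := by
  have h1 : IntervalIntegrable (fun s => (t - s) ^ (q - 1) * s ^ p) volume 0 (t/2) := by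
    have hi : IntervalIntegrable (fun s : ℝ => s ^ p) volume 0 (t/2) :=
      intervalIntegral.intervalIntegrable_rpow' hp
    apply hi.continuousOn_mul
    intro s hs
    rw [Set.uIcc_of_le (by linarith : (0:ℝ) ≤ t/2)] at hs
    have : t - s ≠ 0 := by cases hs; intro h; linarith
    exact ((Real.continuousAt_rpow_const _ _ (Or.inl this)).comp
      (by continuity : Continuous fun s : ℝ => t - s).continuousAt).continuousWithinAt
  have h2 : IntervalIntegrable (fun s => (t - s) ^ (q - 1) * s ^ p) volume (t/2) t := by
    have hi : IntervalIntegrable (fun s : ℝ => s ^ (q - 1)) volume 0 (t/2) :=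
      intervalIntegral.intervalIntegrable_rpow' (by linarith)
    have hi2 := hi.comp_sub_left t
    rw [sub_zero] at hi2
    have hi3 : IntervalIntegrable (fun s : ℝ => (t - s) ^ (q - 1)) volume (t/2) t := by
      have : t - t/2 = t/2 := by ring
      rw [this] at hi2; exact hi2.symm
    apply hi3.mul_continuousOn
    intro s hs
    rw [Set.uIcc_of_le (by linarith : t/2 ≤ t)] at hs
    have : s ≠ 0 := by cases hs; intro h; linarith
    exact (Real.continuousAt_rpow_const _ _ (Or.inl this)).continuousWithinAt
  exact h1.trans h2



lemma beta_value {p q t : ℝ} (hp : -1 < p) (hq : 0 < q) (ht : 0 < t) :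
    ∫ s in (0:ℝ)..t, (t - s) ^ (q - 1) * s ^ p
      = Real.Gamma (p + 1) * Real.Gamma q / Real.Gamma (p + 1 + q) * t ^ (p + q) := by
  have hsub := intervalIntegral.smul_integral_comp_mul_left
    (f := fun s => (t - s) ^ (q - 1) * s ^ p) (a := 0) (b := 1) t
  rw [mul_zero, mul_one] at hsub
  rw [← hsub]
  have hcongr : ∫ x in (0:ℝ)..1, (t - t*x) ^ (q - 1) * (t*x) ^ p
      = (t ^ (q-1) * t ^ p) * ∫ x in (0:ℝ)..1, x ^ ((p+1) - 1) * (1 - x) ^ (q - 1) := by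
    rw [← intervalIntegral.integral_const_mul]
    apply intervalIntegral.integral_congr
    intro x hx
    simp only []
    rw [Set.uIcc_of_le (by norm_num : (0:ℝ) ≤ 1)] at hx
    obtain ⟨hx0, hx1⟩ := hx
    have h1 : t - t*x = t * (1-x) := by ring
    rw [h1, Real.mul_rpow ht.le (by linarith), Real.mul_rpow ht.le hx0]
    have : (p + 1) - 1 = p := by ring
    rw [this]; ring
  rw [hcongr, real_beta (by linarith : (0:ℝ) < p + 1) hq]
  rw [smul_eq_mul]
  have hpow : t * (t ^ (q-1) * t ^ p) = t ^ (p+q) := by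
    nth_rewrite 1 [show t = t ^ (1:ℝ) by rw [Real.rpow_one]]
    rw [← Real.rpow_add ht, ← Real.rpow_add ht]
    congr 1; ring
  rw [← hpow]; ring



noncomputable def geF (α m c t : ℝ) : ℝ :=
  ∑' k : ℕ, m ^ k * t ^ (α * k + c - 1) / Real.Gamma (α * k + c)

lemma geF_term_eq {α m c t : ℝ} (ht : 0 < t) (k : ℕ) :
    m ^ k * t ^ (α * k + c - 1) / Real.Gamma (α * k + c)
      = t ^ (c - 1) * ((m * t ^ α) ^ k / Real.Gamma (α * k + c)) := by
  rw [show α * k + c - 1 = α * k + (c - 1) by ring, Real.rpow_add ht,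
    mul_pow, Real.rpow_mul ht.le, Real.rpow_natCast]
  ring

lemma summable_geF {α : ℝ} (hα : 1 < α) {m c t : ℝ} (ht : 0 < t) :
    Summable (fun k : ℕ => m ^ k * t ^ (α * k + c - 1) / Real.Gamma (α * k + c)) := by
  apply Summable.congr (((summable_ml hα c (m * t ^ α)).mul_left (t ^ (c-1))))
  intro k
  exact (geF_term_eq ht k).symm

lemma geF_eq {α m c t : ℝ} (hα : 1 < α) (ht : 0 < t) :
    geF α m c t = t ^ (c - 1) * mlE α c (m * t ^ α) := by
  rw [geF, mlE, ← tsum_mul_left]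
  exact tsum_congr fun k => geF_term_eq ht k



lemma beta_integrableOn {p q t : ℝ} (hp : -1 < p) (hq : 0 < q) (ht : 0 < t) :
    IntegrableOn (fun s => (t - s) ^ (q - 1) * s ^ p) (Ioc 0 t) := by
  have := beta_integrable hp hq ht
  rwa [intervalIntegrable_iff, uIoc_of_le ht.le] at this

lemma beta_value' {p q t : ℝ} (hp : -1 < p) (hq : 0 < q) (ht : 0 < t) :
    ∫ s in Ioc (0:ℝ) t, (t - s) ^ (q - 1) * s ^ p
      = Real.Gamma (p + 1) * Real.Gamma q / Real.Gamma (p + 1 + q) * t ^ (p + q) := by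
  rw [← beta_value hp hq ht, intervalIntegral.integral_of_le ht.le]

/-- fractional integral of a single `geF` term. -/
lemma term_integral {α m : ℝ} (hα : 1 < α) {c q t : ℝ} (hc : 0 < c) (hq : 0 < q) (ht : 0 < t) (k : ℕ) :
    ∫ s in Ioc (0:ℝ) t, (t - s) ^ (q - 1) * (m ^ k * s ^ (α * k + c - 1) / Real.Gamma (α * k + c))
      = Real.Gamma q * (m ^ k * t ^ (α * k + (c + q) - 1) / Real.Gamma (α * k + (c + q)))
      ∧ (-1:ℝ) < α * k + c - 1 := by
  have hk : (0:ℝ) ≤ α * k := mul_nonneg (by linarith) (Nat.cast_nonneg k)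
  have hp : (-1:ℝ) < α * k + c - 1 := by linarith
  refine ⟨?_, hp⟩
  have h1 : ∀ s : ℝ, (t - s) ^ (q - 1) * (m ^ k * s ^ (α * k + c - 1) / Real.Gamma (α * k + c))
      = (m ^ k / Real.Gamma (α * k + c)) * ((t - s) ^ (q - 1) * s ^ (α * k + c - 1)) := by
    intro s; ring
  simp only [h1]
  rw [MeasureTheory.integral_const_mul, beta_value' hp hq ht]
  have hΓ1 : Real.Gamma (α * k + c - 1 + 1) = Real.Gamma (α * k + c) := by ring_nf
  have hΓ2 : Real.Gamma (α * k + c - 1 + 1 + q) = Real.Gamma (α * k + (c + q)) := by ring_nf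
  have hE : t ^ (α * k + c - 1 + q) = t ^ (α * k + (c + q) - 1) := by ring_nf
  rw [hΓ1, hΓ2, hE]
  have hΓpos : 0 < Real.Gamma (α * k + c) := Real.Gamma_pos_of_pos (by linarith)
  field_simp

lemma term_integrableOn {α m : ℝ} (hα : 1 < α) {c q t : ℝ} (hc : 0 < c) (hq : 0 < q)
    (ht : 0 < t) (d : ℝ) (k : ℕ) :
    IntegrableOn (fun s => (t - s) ^ (q - 1) *
      (d * (m ^ k * s ^ (α * k + c - 1) / Real.Gamma (α * k + c)))) (Ioc 0 t) := by
  have hk : (0:ℝ) ≤ α * k := mul_nonneg (by linarith) (Nat.cast_nonneg k)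
  have hp : (-1:ℝ) < α * k + c - 1 := by linarith
  have h := (beta_integrableOn hp hq ht).const_mul (d * m ^ k / Real.Gamma (α * k + c))
  exact h.congr (ae_of_all _ fun s => by ring)

lemma pair_integrableOn {α m : ℝ} (hα : 1 < α) {q t : ℝ} (hq : 0 < q) (ht : 0 < t)
    (c₁ c₂ : ℝ) (k : ℕ) :
    IntegrableOn (fun s => (t - s) ^ (q - 1) *
      (c₁ * (m ^ k * s ^ (α * k + α - 1) / Real.Gamma (α * k + α))
        + c₂ * (m ^ k * s ^ (α * k + (α - 1) - 1) / Real.Gamma (α * k + (α - 1)))))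
      (Ioc 0 t) := by
  have h1 := term_integrableOn (m := m) hα (show (0:ℝ) < α by linarith) hq ht c₁ k
  have h2 := term_integrableOn (m := m) hα (show (0:ℝ) < α - 1 by linarith) hq ht c₂ k
  exact (h1.add h2).congr (ae_of_all _ fun s => by simp only [Pi.add_apply]; ring)

lemma pair_integral {α m : ℝ} (hα : 1 < α) {q t : ℝ} (hq : 0 < q) (ht : 0 < t)
    (c₁ c₂ : ℝ) (k : ℕ) :
    ∫ s in Ioc (0:ℝ) t, (t - s) ^ (q - 1) *
      (c₁ * (m ^ k * s ^ (α * k + α - 1) / Real.Gamma (α * k + α))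
        + c₂ * (m ^ k * s ^ (α * k + (α - 1) - 1) / Real.Gamma (α * k + (α - 1))))
      = Real.Gamma q * (c₁ * (m ^ k * t ^ (α * k + (α + q) - 1) / Real.Gamma (α * k + (α + q)))
        + c₂ * (m ^ k * t ^ (α * k + (α - 1 + q) - 1) / Real.Gamma (α * k + (α - 1 + q)))) := by
  have h1 := (term_integral (m := m) hα (show (0:ℝ) < α by linarith) hq ht k).1
  have h2 := (term_integral (m := m) hα (show (0:ℝ) < α - 1 by linarith) hq ht k).1
  have hsplit : (fun s : ℝ => (t - s) ^ (q - 1) *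
      (c₁ * (m ^ k * s ^ (α * k + α - 1) / Real.Gamma (α * k + α))
        + c₂ * (m ^ k * s ^ (α * k + (α - 1) - 1) / Real.Gamma (α * k + (α - 1)))))
      = fun s : ℝ =>
        c₁ * ((t - s) ^ (q - 1) * (m ^ k * s ^ (α * k + α - 1) / Real.Gamma (α * k + α)))
        + c₂ * ((t - s) ^ (q - 1) *
            (m ^ k * s ^ (α * k + (α - 1) - 1) / Real.Gamma (α * k + (α - 1)))) := by
    funext s; ring
  have hp1 : (-1:ℝ) < α * k + α - 1 := (term_integral (m := m) hα (show (0:ℝ) < α by linarith) hq ht k).2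
  have hp2 : (-1:ℝ) < α * k + (α - 1) - 1 :=
    (term_integral (m := m) hα (show (0:ℝ) < α - 1 by linarith) hq ht k).2
  have hi1 : IntegrableOn (fun s => c₁ * ((t - s) ^ (q - 1) *
      (m ^ k * s ^ (α * k + α - 1) / Real.Gamma (α * k + α)))) (Ioc 0 t) :=
    (((beta_integrableOn hp1 hq ht).const_mul (m ^ k / Real.Gamma (α * k + α))).congr
      (ae_of_all _ fun s => by ring)).const_mul c₁
  have hi2 : IntegrableOn (fun s => c₂ * ((t - s) ^ (q - 1) *
      (m ^ k * s ^ (α * k + (α - 1) - 1) / Real.Gamma (α * k + (α - 1))))) (Ioc 0 t) :=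
    (((beta_integrableOn hp2 hq ht).const_mul
        (m ^ k / Real.Gamma (α * k + (α - 1)))).congr
      (ae_of_all _ fun s => by ring)).const_mul c₂
  rw [hsplit, MeasureTheory.integral_add hi1 hi2, MeasureTheory.integral_const_mul,
    MeasureTheory.integral_const_mul, h1, h2]
  ring

lemma key_int {α m : ℝ} (hα : 1 < α) (c₁ c₂ : ℝ) {q t : ℝ} (hq : 0 < q) (ht : 0 < t) :
    ∫ s in (0:ℝ)..t, (t - s) ^ (q - 1) * (c₁ * geF α m α s + c₂ * geF α m (α - 1) s)
      = Real.Gamma q * (c₁ * geF α m (α + q) t + c₂ * geF α m (α - 1 + q) t) := by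
  set F : ℕ → ℝ → ℝ := fun k s => (t - s) ^ (q - 1) *
      (c₁ * (m ^ k * s ^ (α * k + α - 1) / Real.Gamma (α * k + α))
        + c₂ * (m ^ k * s ^ (α * k + (α - 1) - 1) / Real.Gamma (α * k + (α - 1)))) with hF
  rw [intervalIntegral.integral_of_le ht.le]
  have hEq : EqOn (fun s => (t - s) ^ (q - 1) * (c₁ * geF α m α s + c₂ * geF α m (α - 1) s))
      (fun s => ∑' k, F k s) (Ioc 0 t) := by
    intro s hs
    have hs0 : 0 < s := hs.1
    simp only [hF, geF]
    rw [tsum_mul_left, Summable.tsum_add ((summable_geF hα hs0).mul_left c₁)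
      ((summable_geF hα hs0).mul_left c₂), tsum_mul_left, tsum_mul_left]
  rw [MeasureTheory.setIntegral_congr_fun measurableSet_Ioc hEq]
  have hnormbound : ∀ k, ∫ s in Ioc (0:ℝ) t, ‖F k s‖
      ≤ Real.Gamma q *
        (|c₁| * (|m| ^ k * t ^ (α * k + (α + q) - 1) / Real.Gamma (α * k + (α + q)))
        + |c₂| * (|m| ^ k * t ^ (α * k + (α - 1 + q) - 1)
            / Real.Gamma (α * k + (α - 1 + q)))) := by
    intro k
    rw [← pair_integral (m := |m|) hα hq ht |c₁| |c₂| k]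
    apply MeasureTheory.integral_mono_of_nonneg (ae_of_all _ fun s => norm_nonneg _)
      (pair_integrableOn (m := |m|) hα hq ht |c₁| |c₂| k)
    rw [Filter.EventuallyLE, MeasureTheory.ae_restrict_iff' measurableSet_Ioc]
    apply ae_of_all
    intro s hs
    have hk0 : (0:ℝ) ≤ α * k := mul_nonneg (by linarith) (Nat.cast_nonneg k)
    have hts : (0:ℝ) ≤ (t - s) ^ (q - 1) := Real.rpow_nonneg (by linarith [hs.2]) _
    have hΓ1 : 0 < Real.Gamma (α * k + α) := Real.Gamma_pos_of_pos (by linarith)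
    have hΓ2 : 0 < Real.Gamma (α * k + (α - 1)) := Real.Gamma_pos_of_pos (by linarith)
    have hA : |c₁ * (m ^ k * s ^ (α * k + α - 1) / Real.Gamma (α * k + α))|
        = |c₁| * (|m| ^ k * s ^ (α * k + α - 1) / Real.Gamma (α * k + α)) := by
      rw [abs_mul, abs_div, abs_mul, abs_pow, abs_of_nonneg (Real.rpow_nonneg hs.1.le _),
        abs_of_pos hΓ1]
    have hB : |c₂ * (m ^ k * s ^ (α * k + (α - 1) - 1) / Real.Gamma (α * k + (α - 1)))|
        = |c₂| * (|m| ^ k * s ^ (α * k + (α - 1) - 1) / Real.Gamma (α * k + (α - 1))) := by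
      rw [abs_mul, abs_div, abs_mul, abs_pow, abs_of_nonneg (Real.rpow_nonneg hs.1.le _),
        abs_of_pos hΓ2]
    calc ‖F k s‖ = (t - s) ^ (q - 1)
        * |c₁ * (m ^ k * s ^ (α * k + α - 1) / Real.Gamma (α * k + α))
          + c₂ * (m ^ k * s ^ (α * k + (α - 1) - 1) / Real.Gamma (α * k + (α - 1)))| := by
          rw [hF]; rw [Real.norm_eq_abs, abs_mul, abs_of_nonneg hts]
      _ ≤ (t - s) ^ (q - 1)
          * (|c₁ * (m ^ k * s ^ (α * k + α - 1) / Real.Gamma (α * k + α))|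
            + |c₂ * (m ^ k * s ^ (α * k + (α - 1) - 1) / Real.Gamma (α * k + (α - 1)))|) :=
          mul_le_mul_of_nonneg_left (abs_add_le _ _) hts
      _ = (t - s) ^ (q - 1)
          * (|c₁| * (|m| ^ k * s ^ (α * k + α - 1) / Real.Gamma (α * k + α))
            + |c₂| * (|m| ^ k * s ^ (α * k + (α - 1) - 1) / Real.Gamma (α * k + (α - 1)))) := by
          rw [hA, hB]
  have hsum : Summable fun k => ∫ s in Ioc (0:ℝ) t, ‖F k s‖ := by
    apply Summable.of_nonneg_of_le
      (fun k => MeasureTheory.integral_nonneg fun s => norm_nonneg _) hnormbound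
    exact (((summable_geF (m := |m|) hα ht).mul_left |c₁|).add
      ((summable_geF (m := |m|) hα ht).mul_left |c₂|)).mul_left _
  have hint : ∀ k, Integrable (F k) (volume.restrict (Ioc 0 t)) := fun k =>
    pair_integrableOn (m := m) hα hq ht c₁ c₂ k
  rw [← MeasureTheory.integral_tsum_of_summable_integral_norm hint hsum]
  rw [tsum_congr (fun k => pair_integral (m := m) hα hq ht c₁ c₂ k), tsum_mul_left]
  congr 1
  rw [Summable.tsum_add ((summable_geF hα ht).mul_left c₁) ((summable_geF hα ht).mul_left c₂),
    tsum_mul_left, tsum_mul_left]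
  rfl



lemma summable_ml_lin {α : ℝ} (hα : 1 < α) {c : ℝ} (hc : 1 ≤ c) {R : ℝ} (hR : 0 ≤ R) :
    Summable (fun k : ℕ => (α * k + c - 1) * R ^ k / Real.Gamma (α * k + c)) := by
  have hb : Summable (fun k : ℕ => (α + c - 1) * ((2 * R) ^ k / Real.Gamma (α * k + c))) :=
    (summable_ml hα c (2 * R)).mul_left _
  apply hb.of_nonneg_of_le
  · intro k
    have hk0 : (0:ℝ) ≤ α * k := mul_nonneg (by linarith) (Nat.cast_nonneg k)
    have hΓ : 0 < Real.Gamma (α * k + c) := Real.Gamma_pos_of_pos (by linarith)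
    have hx : (0:ℝ) ≤ α * k + c - 1 := by linarith
    positivity
  · intro k
    have hk0 : (0:ℝ) ≤ α * k := mul_nonneg (by linarith) (Nat.cast_nonneg k)
    have hΓ : 0 < Real.Gamma (α * k + c) := Real.Gamma_pos_of_pos (by linarith)
    have h2k : ((k:ℝ) + 1) ≤ 2 ^ k := by
      have h := Nat.lt_two_pow_self (n := k)
      exact_mod_cast Nat.succ_le_of_lt h
    have hRk : (0:ℝ) ≤ R ^ k := by positivity
    have hkey : (α * k + c - 1) * R ^ k ≤ (α + c - 1) * (2 ^ k * R ^ k) := by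
      have h1 : α * k + c - 1 ≤ (α + c - 1) * (k + 1) := by nlinarith [Nat.cast_nonneg (α := ℝ) k]
      have h2 : (α + c - 1) * (k + 1) ≤ (α + c - 1) * 2 ^ k := by
        apply mul_le_mul_of_nonneg_left h2k (by linarith)
      nlinarith [pow_nonneg (by norm_num : (0:ℝ) ≤ 2) k]
    calc (α * k + c - 1) * R ^ k / Real.Gamma (α * k + c)
        ≤ ((α + c - 1) * (2 ^ k * R ^ k)) / Real.Gamma (α * k + c) := by gcongr
      _ = (α + c - 1) * ((2 * R) ^ k / Real.Gamma (α * k + c)) := by rw [mul_pow]; ring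

lemma hasDerivAt_geF {α m : ℝ} (hα : 1 < α) {c t : ℝ} (hc : 1 ≤ c) (ht : 0 < t) :
    HasDerivAt (geF α m c) (geF α m (c - 1) t) t := by
  set C : ℝ := (t/2) ^ (c - 2) + (2*t) ^ (c - 2) with hC
  have hCpos : 0 ≤ C := by positivity
  set R : ℝ := (2*t) ^ α * |m| with hR
  have hRpos : 0 ≤ R := by positivity
  set u : ℕ → ℝ := fun k => C * ((α * k + c - 1) * R ^ k / Real.Gamma (α * k + c)) with hu
  have husum : Summable u := (summable_ml_lin hα hc hRpos).mul_left _
  set g' : ℕ → ℝ → ℝ := fun k y =>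
    m ^ k * ((α * k + c - 1) * y ^ (α * k + c - 1 - 1)) / Real.Gamma (α * k + c) with hg'
  have hderiv : HasDerivAt (fun z => ∑' k : ℕ, m ^ k * z ^ (α * k + c - 1)
        / Real.Gamma (α * k + c)) (∑' k, g' k t) t := by
    refine hasDerivAt_tsum_of_isPreconnected husum isOpen_Ioo
      (convex_Ioo (t/2) (2*t)).isPreconnected (y₀ := t) ?_ ?_ ?_ ?_ ?_
    · intro k y hy
      have hy0 : 0 < y := lt_trans (by linarith) hy.1
      exact ((Real.hasDerivAt_rpow_const (Or.inl hy0.ne')).const_mul _).div_const _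
    · intro k y hy
      have hy0 : 0 < y := lt_trans (by linarith) hy.1
      have hk0 : (0:ℝ) ≤ α * k := mul_nonneg (by linarith) (Nat.cast_nonneg k)
      have hΓ : 0 < Real.Gamma (α * k + c) := Real.Gamma_pos_of_pos (by linarith)
      have hxk : (0:ℝ) ≤ α * k + c - 1 := by linarith
      have hyd : y ^ (α * k + c - 1 - 1) = y ^ (α * (k:ℝ)) * y ^ (c - 2) := by
        rw [← Real.rpow_add hy0]; congr 1; ring
      have hb1 : y ^ (α * (k:ℝ)) ≤ ((2*t) ^ α) ^ k := by
        rw [Real.rpow_mul hy0.le, Real.rpow_natCast]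
        exact pow_le_pow_left₀ (Real.rpow_nonneg hy0.le _)
          (Real.rpow_le_rpow hy0.le (by linarith [hy.2]) (by linarith)) k
      have hb2 : y ^ (c - 2) ≤ C := by
        rcases le_or_gt 2 c with h2 | h2
        · have : y ^ (c-2) ≤ (2*t) ^ (c-2) :=
            Real.rpow_le_rpow hy0.le (by linarith [hy.2]) (by linarith)
          have h0 : (0:ℝ) ≤ (t/2) ^ (c-2) := by positivity
          rw [hC]; linarith
        · have : y ^ (c-2) ≤ (t/2) ^ (c-2) :=
            Real.rpow_le_rpow_of_nonpos (by linarith) hy.1.le (by linarith)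
          have h0 : (0:ℝ) ≤ (2*t) ^ (c-2) := by positivity
          rw [hC]; linarith
      have hynn : (0:ℝ) ≤ y ^ (α * (k:ℝ)) := Real.rpow_nonneg hy0.le _
      rw [hg']
      have : ‖m ^ k * ((α * k + c - 1) * y ^ (α * k + c - 1 - 1)) / Real.Gamma (α * k + c)‖
          = |m| ^ k * ((α * k + c - 1) * y ^ (α * k + c - 1 - 1)) / Real.Gamma (α * k + c) := by
        rw [Real.norm_eq_abs, abs_div, abs_mul, abs_pow, abs_mul, abs_of_nonneg hxk,
          abs_of_nonneg (Real.rpow_nonneg hy0.le _), abs_of_pos hΓ]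
      rw [this, hu, hR]
      rw [hyd]
      have hmk : (0:ℝ) ≤ |m| ^ k := by positivity
      calc |m| ^ k * ((α * k + c - 1) * (y ^ (α * (k:ℝ)) * y ^ (c - 2)))
            / Real.Gamma (α * k + c)
          ≤ |m| ^ k * ((α * k + c - 1) * (((2*t) ^ α) ^ k * C)) / Real.Gamma (α * k + c) := by
            gcongr
        _ = C * ((α * k + c - 1) * ((2*t) ^ α * |m|) ^ k / Real.Gamma (α * k + c)) := by
            rw [mul_pow]; ring
    · exact Set.mem_Ioo.mpr ⟨by linarith, by linarith⟩
    · exact summable_geF hα ht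
    · exact Set.mem_Ioo.mpr ⟨by linarith, by linarith⟩
  have heq : (∑' k, g' k t) = geF α m (c - 1) t := by
    rw [geF]
    apply tsum_congr
    intro k
    simp only [hg']
    rcases eq_or_ne (α * k + c - 1) 0 with hx | hx
    · have e2 : α * (k:ℝ) + (c - 1) = 0 := by linarith [hx]
      rw [e2, Real.Gamma_zero, div_zero, hx]
      simp
    · have hΓrec : Real.Gamma (α * k + c) = (α * k + c - 1) * Real.Gamma (α * k + c - 1) := by
        have := Real.Gamma_add_one hx
        rw [show α * (k:ℝ) + c - 1 + 1 = α * k + c by ring] at this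
        exact this
      rw [hΓrec, show α * (k:ℝ) + (c - 1) - 1 = α * k + c - 1 - 1 by ring,
        show α * (k:ℝ) + (c - 1) = α * k + c - 1 by ring]
      rw [show m ^ k * ((α * k + c - 1) * t ^ (α * k + c - 1 - 1))
          = (α * k + c - 1) * (m ^ k * t ^ (α * k + c - 1 - 1)) by ring]
      rw [mul_div_mul_left _ _ hx]
  rw [← heq]
  exact hderiv

end Aux

/-- The function `Ê₁` satisfies `(I^β Ê₁)(a) = 1` and `(D^γ Ê₁)(a) = 0`. -/
theorem E1_inner_conditions (α β γ m a : ℝ)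
    (hα1 : 1 < α) (hα2 : α ≤ 2) (hβ0 : 0 ≤ β) (hβ : β ≤ 2 - α)
    (hγ0 : 0 < γ) (hγ : γ ≤ α - 1) (ha : 0 < a)
    (hdet : mlE α (α + β) (m * a ^ α) * mlE α (α - 1 - γ) (m * a ^ α)
      ≠ mlE α (α + β - 1) (m * a ^ α) * mlE α (α - γ) (m * a ^ α)) :
    let Δ : ℝ := mlE α (α + β) (m * a ^ α) * mlE α (α - 1 - γ) (m * a ^ α)
      - mlE α (α + β - 1) (m * a ^ α) * mlE α (α - γ) (m * a ^ α)
    let E₁ : ℝ → ℝ := fun t =>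
      t ^ (α - 2) * (t * mlE α (α - 1 - γ) (m * a ^ α) * mlE α α (m * t ^ α)
        - a * mlE α (α - γ) (m * a ^ α) * mlE α (α - 1) (m * t ^ α))
      / (a ^ (α + β - 1) * Δ)
    rlI β E₁ a = 1 ∧ rlD γ E₁ a = 0 := by
  intro Δ E₁
  have hΔ : Δ ≠ 0 := sub_ne_zero.mpr hdet
  have hapow : (0:ℝ) < a ^ (α + β - 1) := Real.rpow_pos_of_pos ha _
  have hΔdef : Δ = mlE α (α + β) (m * a ^ α) * mlE α (α - 1 - γ) (m * a ^ α)
      - mlE α (α + β - 1) (m * a ^ α) * mlE α (α - γ) (m * a ^ α) := rfl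
  set A : ℝ := mlE α (α - 1 - γ) (m * a ^ α) with hA
  set B : ℝ := mlE α (α - γ) (m * a ^ α) with hB
  set K : ℝ := a ^ (α + β - 1) * Δ with hK
  have hK0 : K ≠ 0 := mul_ne_zero hapow.ne' hΔ
  set c₁ : ℝ := A / K with hc₁
  set c₂ : ℝ := -(a * B) / K with hc₂
  -- E₁ agrees with a combination of `geF`s on positive reals
  have hE₁ : ∀ s : ℝ, 0 < s →
      E₁ s = c₁ * geF α m α s + c₂ * geF α m (α - 1) s := by
    intro s hs
    rw [hc₁, hc₂]
    show s ^ (α - 2) * (s * A * mlE α α (m * s ^ α) - a * B * mlE α (α - 1) (m * s ^ α)) / K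
      = A / K * geF α m α s + -(a * B) / K * geF α m (α - 1) s
    rw [geF_eq hα1 hs, geF_eq hα1 hs]
    have hs1 : s ^ (α - 1) = s ^ (α - 2) * s := by
      rw [← Real.rpow_add_one hs.ne' (α - 2)]; congr 1; ring
    have hs2 : s ^ (α - 1 - 1) = s ^ (α - 2) := by congr 1; ring
    rw [hs1, hs2]
    ring
  -- value of the combination after fractional integration of order β
  have hone : c₁ * geF α m (α + β) a + c₂ * geF α m (α - 1 + β) a = 1 := by
    rw [geF_eq hα1 ha, geF_eq hα1 ha, hc₁, hc₂]
    have e1 : α - 1 + β = α + β - 1 := by ring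
    rw [e1]
    have e2 : a ^ (α + β - 1) = a ^ (α + β - 1 - 1) * a := by
      rw [← Real.rpow_add_one ha.ne' (α + β - 1 - 1)]; congr 1; ring
    have e3 : a ^ (α + β - 1 - 1) ≠ 0 := (Real.rpow_pos_of_pos ha _).ne'
    rw [hK, hΔdef]
    rw [e2]
    field_simp
    rw [← sub_eq_add_neg]
    exact div_self (fun h => hΔ (by rw [hΔdef]; linear_combination h))
  -- value of the combination after fractional differentiation of order γ
  have hzero : c₁ * geF α m (α - γ) a + c₂ * geF α m (α - γ - 1) a = 0 := by
    rw [geF_eq hα1 ha, geF_eq hα1 ha, hc₁, hc₂]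
    have e1 : α - γ - 1 = α - 1 - γ := by ring
    rw [e1]
    have e2 : a ^ (α - 1 - γ - 1) * a = a ^ (α - 1 - γ) := by
      rw [← Real.rpow_add_one ha.ne' (α - 1 - γ - 1)]; congr 1; ring
    rw [← hA, ← hB, ← e2]
    ring
  constructor
  · -- the fractional integral condition
    rcases eq_or_lt_of_le hβ0 with hβz | hβpos
    · subst hβz
      rw [rlI, if_pos rfl, hE₁ a ha]
      rw [show α + (0:ℝ) = α by ring, show α - 1 + (0:ℝ) = α - 1 by ring] at hone
      exact hone
    · rw [rlI, if_neg hβpos.ne']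
      have hIeq : ∫ s in (0:ℝ)..a, (a - s) ^ (β - 1) * E₁ s
          = ∫ s in (0:ℝ)..a, (a - s) ^ (β - 1)
              * (c₁ * geF α m α s + c₂ * geF α m (α - 1) s) := by
        rw [intervalIntegral.integral_of_le ha.le, intervalIntegral.integral_of_le ha.le]
        apply MeasureTheory.setIntegral_congr_fun measurableSet_Ioc
        intro s hs
        simp only
        rw [hE₁ s hs.1]
      rw [hIeq, key_int hα1 c₁ c₂ hβpos ha, one_div,
        inv_mul_cancel_left₀ (Real.Gamma_pos_of_pos hβpos).ne']
      exact hone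
  · -- the fractional derivative condition
    by_cases hγ1 : γ = 1
    · subst hγ1
      rw [rlD, if_pos rfl]
      have hev : E₁ =ᶠ[nhds a]
          (fun τ => c₁ * geF α m α τ + c₂ * geF α m (α - 1) τ) := by
        filter_upwards [Ioi_mem_nhds ha] with τ hτ
        exact hE₁ τ hτ
      rw [hev.deriv_eq]
      have hd : HasDerivAt (fun τ => c₁ * geF α m α τ + c₂ * geF α m (α - 1) τ)
          (c₁ * geF α m (α - 1) a + c₂ * geF α m (α - 1 - 1) a) a :=
        ((hasDerivAt_geF hα1 (by linarith) ha).const_mul c₁).add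
          ((hasDerivAt_geF hα1 (by linarith : (1:ℝ) ≤ α - 1) ha).const_mul c₂)
      rw [hd.deriv]
      have e1 : α - 1 = α - 1 := rfl
      have e2 : α - (1:ℝ) - 1 = α - 1 - 1 := rfl
      rw [show α - (1:ℝ) - 1 = α - 1 - 1 from rfl]
      have := hzero
      rwa [show α - (1:ℝ) = α - 1 from rfl, show α - (1:ℝ) - 1 = α - 1 - 1 from rfl] at this
    · have hγlt : γ < 1 := lt_of_le_of_ne (by linarith) hγ1
      have h1γ : 0 < 1 - γ := by linarith
      rw [rlD, if_neg hγ1]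
      have hev : (fun τ : ℝ => (1 / Real.Gamma (1 - γ))
            * ∫ s in (0:ℝ)..τ, (τ - s) ^ (-γ) * E₁ s) =ᶠ[nhds a]
          (fun τ => c₁ * geF α m (α + (1 - γ)) τ + c₂ * geF α m (α - 1 + (1 - γ)) τ) := by
        filter_upwards [Ioi_mem_nhds ha] with τ hτ
        have hτ0 : 0 < τ := hτ
        have hIeq : ∫ s in (0:ℝ)..τ, (τ - s) ^ (-γ) * E₁ s
            = ∫ s in (0:ℝ)..τ, (τ - s) ^ ((1 - γ) - 1)
                * (c₁ * geF α m α s + c₂ * geF α m (α - 1) s) := by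
          rw [intervalIntegral.integral_of_le hτ0.le, intervalIntegral.integral_of_le hτ0.le]
          apply MeasureTheory.setIntegral_congr_fun measurableSet_Ioc
          intro s hs
          simp only
          rw [hE₁ s hs.1, show (1:ℝ) - γ - 1 = -γ by ring]
        rw [hIeq, key_int hα1 c₁ c₂ h1γ hτ0, one_div,
          inv_mul_cancel_left₀ (Real.Gamma_pos_of_pos h1γ).ne']
      rw [hev.deriv_eq]
      have hd : HasDerivAt
          (fun τ => c₁ * geF α m (α + (1 - γ)) τ + c₂ * geF α m (α - 1 + (1 - γ)) τ)
          (c₁ * geF α m (α + (1 - γ) - 1) a + c₂ * geF α m (α - 1 + (1 - γ) - 1) a) a :=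
        ((hasDerivAt_geF hα1 (by linarith) ha).const_mul c₁).add
          ((hasDerivAt_geF hα1 (by linarith : (1:ℝ) ≤ α - 1 + (1 - γ)) ha).const_mul c₂)
      rw [hd.deriv, show α + (1 - γ) - 1 = α - γ by ring,
        show α - 1 + (1 - γ) - 1 = α - γ - 1 by ring]
      exact hzero
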